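/- For positive integers m_1,…,m_r with m = lcm(m_1,…,m_r) and any integer a, the sum T_a(m_1,…,m_r) := Σ over k_1,…,k_{r−1}, ℓ mod m with gcd(ℓ,m)=1 of c_{m_1}(k_1)···c_{m_{r−1}}(k_{r−1})·c_{m_r}(k_1+…+k_{r−1}+ℓ−a) equals m^{r−1} μ(m) c_m(a) if m_1 = … = m_r = m, and 0 otherwise. -/

import Mathlib

open Finset ArithmeticFunction
open scoped ArithmeticFunction.Moebius

/-- The Ramanujan sum `c_n(k) = ∑_{d ∣ gcd(k,n)} d · μ(n/d)`, for integer `k`. -/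
def ramanujanSum (n : ℕ) (k : ℤ) : ℤ :=
  ∑ d ∈ (Int.gcd k n).divisors, (d : ℤ) * μ (n / d)

lemma rs_neg (n : ℕ) (k : ℤ) : ramanujanSum n (-k) = ramanujanSum n k := by
  simp [ramanujanSum, Int.neg_gcd]

lemma moebius_sum (n : ℕ) : ∑ e ∈ n.divisors, μ e = if n = 1 then 1 else 0 := by
  have := (coe_mul_zeta_apply (f := (μ : ArithmeticFunction ℤ)) (x := n)).symm
  rw [this, moebius_mul_coe_zeta, one_apply]

lemma ortho {M : ℕ} (hM : 0 < M) {z : ℂ} (hz : IsPrimitiveRoot z M) (t : ℤ) :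
    ∑ k ∈ range M, z ^ (t * k) = if (M : ℤ) ∣ t then (M : ℂ) else 0 := by
  have hz0 : z ≠ 0 := hz.ne_zero hM.ne'
  have h1 : ∀ k ∈ range M, z ^ (t * (k : ℕ)) = (z ^ t) ^ (k : ℕ) := by
    intro k _
    rw [← zpow_natCast (z ^ t) k, ← zpow_mul]
  rw [Finset.sum_congr rfl h1]
  by_cases hdvd : (M : ℤ) ∣ t
  · have : z ^ t = 1 := (hz.zpow_eq_one_iff_dvd t).mpr hdvd
    simp [this, hdvd]
  · have hne : z ^ t ≠ 1 := fun h => hdvd ((hz.zpow_eq_one_iff_dvd t).mp h)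
    rw [geom_sum_eq hne, if_neg hdvd]
    have : (z ^ t) ^ M = 1 := by
      rw [← zpow_natCast (z ^ t) M, ← zpow_mul, mul_comm, zpow_mul, hz.zpow_eq_one, one_zpow]
    rw [this, sub_self, zero_div]

lemma gcd_divisors_eq {d : ℕ} (hd : 0 < d) (k : ℤ) :
    (Int.gcd k d).divisors = d.divisors.filter (fun f : ℕ => (f : ℤ) ∣ k) := by
  ext e
  simp only [Nat.mem_divisors, Finset.mem_filter]
  constructor
  · rintro ⟨h1, -⟩
    have hk : (e : ℤ) ∣ k := dvd_trans (Int.natCast_dvd_natCast.mpr h1) (Int.gcd_dvd_left _ _)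
    have hdd : (e : ℤ) ∣ (d : ℤ) := dvd_trans (Int.natCast_dvd_natCast.mpr h1) (Int.gcd_dvd_right _ _)
    exact ⟨⟨Int.natCast_dvd_natCast.mp hdd, hd.ne'⟩, hk⟩
  · rintro ⟨⟨h1, -⟩, h2⟩
    refine ⟨Int.natCast_dvd_natCast.mp ?_, ?_⟩
    · exact Int.dvd_coe_gcd h2 (Int.natCast_dvd_natCast.mpr h1)
    · simp only [Int.gcd, ne_eq, Nat.gcd_eq_zero_iff, not_and]
      intro _; simpa using hd.ne'

lemma nat_gcd_divisors_eq {d j : ℕ} (hd : 0 < d) :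
    (Nat.gcd j d).divisors = d.divisors.filter (fun e => e ∣ j) := by
  ext e
  simp only [Nat.mem_divisors, Finset.mem_filter, Nat.dvd_gcd_iff]
  constructor
  · rintro ⟨⟨h1, h2⟩, -⟩; exact ⟨⟨h2, hd.ne'⟩, h1⟩
  · rintro ⟨⟨h1, -⟩, h2⟩
    refine ⟨⟨h2, h1⟩, ?_⟩
    simp [Nat.gcd_eq_zero_iff, hd.ne']

lemma rs_eq_sum {d : ℕ} (hd : 0 < d) {w : ℂ} (hw : IsPrimitiveRoot w d) (k : ℤ) :
    (ramanujanSum d k : ℂ) =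
      ∑ j ∈ (range d).filter (fun j => Nat.gcd j d = 1), w ^ ((j : ℤ) * k) := by
  -- transform RHS
  rw [Finset.sum_filter]
  have step1 : ∀ j ∈ range d,
      (if Nat.gcd j d = 1 then w ^ ((j : ℤ) * k) else 0) =
      ∑ e ∈ d.divisors.filter (fun e => e ∣ j), (μ e : ℂ) * w ^ ((j : ℤ) * k) := by
    intro j _
    rw [← Finset.sum_mul, ← nat_gcd_divisors_eq hd]
    have : ((∑ e ∈ (Nat.gcd j d).divisors, μ e : ℤ) : ℂ)
        = if Nat.gcd j d = 1 then 1 else 0 := by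
      rw [moebius_sum]; split <;> simp
    rw [← Int.cast_sum, this]
    split <;> simp
  rw [Finset.sum_congr rfl step1]
  simp only [Finset.sum_filter]
  rw [Finset.sum_comm]
  have step2 : ∀ e ∈ d.divisors,
      (∑ j ∈ range d, if e ∣ j then (μ e : ℂ) * w ^ ((j : ℤ) * k) else 0) =
      (μ e : ℂ) * (if ((d / e : ℕ) : ℤ) ∣ k then ((d / e : ℕ) : ℂ) else 0) := by
    intro e he
    obtain ⟨hed, hd0⟩ := Nat.mem_divisors.mp he
    have he0 : 0 < e := Nat.pos_of_mem_divisors he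
    rw [← Finset.sum_filter, mul_ite]
    have hbij : ∑ j ∈ (range d).filter (fun j => e ∣ j), (μ e : ℂ) * w ^ ((j : ℤ) * k)
        = ∑ t ∈ range (d / e), (μ e : ℂ) * w ^ (((e * t : ℕ) : ℤ) * k) := by
      refine Finset.sum_nbij' (fun j => j / e) (fun t => e * t) ?_ ?_ ?_ ?_ ?_
      · intro j hj
        simp only [Finset.mem_filter, Finset.mem_range] at hj
        exact Finset.mem_range.mpr (Nat.div_lt_div_of_lt_of_dvd hed hj.1)
      · intro t ht
        simp only [Finset.mem_range] at ht
        refine Finset.mem_filter.mpr ⟨Finset.mem_range.mpr ?_, Dvd.intro t rfl⟩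
        calc e * t < e * (d / e) := (Nat.mul_lt_mul_left he0).mpr ht
        _ = d := Nat.mul_div_cancel' hed
      · intro j hj
        simp only [Finset.mem_filter] at hj
        exact Nat.mul_div_cancel' hj.2
      · intro t ht
        exact Nat.mul_div_cancel_left t he0
      · intro j hj
        simp only [Finset.mem_filter] at hj
        rw [Nat.mul_div_cancel' hj.2]
    rw [hbij, ← Finset.mul_sum]
    congr 1
    have hprim : IsPrimitiveRoot (w ^ e) (d / e) :=
      hw.pow hd (Nat.mul_div_cancel' hed).symm
    have : ∀ t ∈ range (d / e), w ^ (((e * t : ℕ) : ℤ) * k) = (w ^ e) ^ (k * (t : ℕ)) := by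
      intro t _
      rw [← zpow_natCast w e, ← zpow_mul]
      congr 1
      push_cast
      ring
    rw [Finset.sum_congr rfl this, ortho (Nat.div_pos (Nat.le_of_dvd hd hed) he0) hprim k]
    split <;> ring
  rw [Finset.sum_congr rfl step2]
  -- transform LHS
  rw [ramanujanSum, gcd_divisors_eq hd k, Int.cast_sum]
  simp only [Int.cast_mul, Int.cast_natCast]
  rw [Finset.sum_filter]
  rw [show (∑ f ∈ d.divisors, if (f : ℤ) ∣ k then (f : ℂ) * (μ (d / f) : ℂ) else 0)
      = ∑ e ∈ d.divisors, (fun f : ℕ => if (f : ℤ) ∣ k then (f : ℂ) * (μ (d / f) : ℂ) else 0) (d / e)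
      from (Nat.sum_div_divisors d _).symm]
  refine Finset.sum_congr rfl fun e he => ?_
  obtain ⟨hed, hd0⟩ := Nat.mem_divisors.mp he
  simp only [Nat.div_div_self hed hd0]
  rw [mul_ite, mul_zero]
  split <;> ring

lemma cond_iff {M d1 d2 : ℕ} (hM : 0 < M) (h1 : d1 ∣ M) (h2 : d2 ∣ M)
    (h10 : 0 < d1) (h20 : 0 < d2) {j1 j2 : ℕ}
    (hc1 : Nat.gcd j1 d1 = 1) (hc2 : Nat.gcd j2 d2 = 1) :
    ((M : ℤ) ∣ ((M / d1 : ℕ) : ℤ) * (j1 : ℤ) + ((M / d2 : ℕ) : ℤ) * (j2 : ℤ)) ↔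
      (d1 = d2 ∧ (d1 : ℤ) ∣ (j1 : ℤ) + (j2 : ℤ)) := by
  have key : ((M : ℤ) ∣ ((M / d1 : ℕ) : ℤ) * (j1 : ℤ) + ((M / d2 : ℕ) : ℤ) * (j2 : ℤ)) ↔
      M ∣ (M / d1) * j1 + (M / d2) * j2 := by
    rw [show ((M / d1 : ℕ) : ℤ) * (j1 : ℤ) + ((M / d2 : ℕ) : ℤ) * (j2 : ℤ)
        = (((M / d1) * j1 + (M / d2) * j2 : ℕ) : ℤ) by push_cast; ring]
    exact Int.natCast_dvd_natCast
  rw [key, show (d1 : ℤ) ∣ (j1 : ℤ) + (j2 : ℤ) ↔ d1 ∣ j1 + j2 by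
    rw [show (j1 : ℤ) + (j2 : ℤ) = ((j1 + j2 : ℕ) : ℤ) by push_cast; ring]
    exact Int.natCast_dvd_natCast]
  have hMd1 : (M / d1) * d1 = M := Nat.div_mul_cancel h1
  have hMd2 : (M / d2) * d2 = M := Nat.div_mul_cancel h2
  have hq1 : 0 < M / d1 := Nat.div_pos (Nat.le_of_dvd hM h1) h10
  constructor
  · intro h
    have hA : Nat.gcd ((M / d1) * j1) M = M / d1 := by
      have h := Nat.gcd_mul_left (M / d1) j1 d1
      rw [hMd1, hc1, mul_one] at h
      exact h
    have hB : Nat.gcd ((M / d2) * j2) M = M / d2 := by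
      have h := Nat.gcd_mul_left (M / d2) j2 d2
      rw [hMd2, hc2, mul_one] at h
      exact h
    have hAB : Nat.gcd ((M / d1) * j1) M = Nat.gcd ((M / d2) * j2) M := by
      apply Nat.dvd_antisymm
      · apply Nat.dvd_gcd _ (Nat.gcd_dvd_right _ _)
        have : Nat.gcd ((M / d1) * j1) M ∣ (M / d1) * j1 + (M / d2) * j2 :=
          dvd_trans (Nat.gcd_dvd_right _ _) h
        exact (Nat.dvd_add_right (Nat.gcd_dvd_left _ _)).mp this
      · apply Nat.dvd_gcd _ (Nat.gcd_dvd_right _ _)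
        have : Nat.gcd ((M / d2) * j2) M ∣ (M / d1) * j1 + (M / d2) * j2 :=
          dvd_trans (Nat.gcd_dvd_right _ _) h
        exact (Nat.dvd_add_left (Nat.gcd_dvd_left _ _)).mp this
    rw [hA, hB] at hAB
    have hd : d1 = d2 := by
      have e1 : M / (M / d1) = d1 := Nat.div_div_self h1 hM.ne'
      have e2 : M / (M / d2) = d2 := Nat.div_div_self h2 hM.ne'
      rw [← e1, ← e2, hAB]
    refine ⟨hd, ?_⟩
    subst hd
    have : (M / d1) * d1 ∣ (M / d1) * (j1 + j2) := by
      rw [hMd1, Nat.mul_add]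
      exact h
    exact (Nat.mul_dvd_mul_iff_left hq1).mp this
  · rintro ⟨hd, hdvd⟩
    subst hd
    obtain ⟨t, ht⟩ := hdvd
    refine ⟨t, ?_⟩
    rw [← Nat.mul_add, ht, ← mul_assoc, hMd1]

lemma unique_j {d : ℕ} (h0 : 0 < d) {j2 : ℕ} (hj2 : j2 < d) (hc2 : Nat.gcd j2 d = 1) :
    ((range d).filter (fun j => Nat.gcd j d = 1)).filter
        (fun j : ℕ => (d : ℤ) ∣ (j : ℤ) + (j2 : ℤ)) =
      {(-(j2 : ZMod d)).val} := by
  haveI : NeZero d := ⟨h0.ne'⟩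
  rw [Finset.filter_filter]
  ext j
  simp only [Finset.mem_filter, Finset.mem_range, Finset.mem_singleton]
  have hdvd_iff : ∀ j : ℕ, ((d : ℤ) ∣ (j : ℤ) + (j2 : ℤ)) ↔ (j : ZMod d) = -(j2 : ZMod d) := by
    intro j
    rw [← ZMod.intCast_zmod_eq_zero_iff_dvd]
    push_cast
    constructor
    · intro h; linear_combination h
    · intro h; rw [h]; ring
  constructor
  · rintro ⟨hj, -, hdvd⟩
    have := (hdvd_iff j).mp hdvd
    rw [← ZMod.val_cast_of_lt hj, this]
  · intro hj
    subst hj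
    have hv : ((((-(j2 : ZMod d)).val : ℕ)) : ZMod d) = -(j2 : ZMod d) := by
      rw [ZMod.natCast_val, ZMod.cast_id]
    refine ⟨ZMod.val_lt _, ?_, (hdvd_iff _).mpr hv⟩
    · have hu : IsUnit ((((-(j2 : ZMod d)).val : ℕ)) : ZMod d) := by
        rw [hv]
        exact (ZMod.isUnit_iff_coprime j2 d |>.mpr hc2).neg
      exact (ZMod.isUnit_iff_coprime _ d).mp hu

lemma convA {M : ℕ} (hM : 0 < M) {d1 d2 : ℕ} (h1 : d1 ∣ M) (h2 : d2 ∣ M)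
    (h10 : 0 < d1) (h20 : 0 < d2) (y : ℤ) :
    ∑ k ∈ range M, ramanujanSum d1 (k : ℤ) * ramanujanSum d2 ((k : ℤ) + y) =
      (if d1 = d2 then (M : ℤ) else 0) * ramanujanSum d2 y := by
  apply (Int.cast_injective (α := ℂ))
  rw [Int.cast_sum, Int.cast_mul, apply_ite ((↑) : ℤ → ℂ), Int.cast_natCast, Int.cast_zero]
  simp only [Int.cast_mul]
  set z : ℂ := Complex.exp (2 * Real.pi * Complex.I / M) with hzdef
  have hz : IsPrimitiveRoot z M := Complex.isPrimitiveRoot_exp M hM.ne'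
  have hz0 : z ≠ 0 := Complex.exp_ne_zero _
  have hw1 : IsPrimitiveRoot (z ^ (M / d1)) d1 := hz.pow hM (Nat.div_mul_cancel h1).symm
  have hw2 : IsPrimitiveRoot (z ^ (M / d2)) d2 := hz.pow hM (Nat.div_mul_cancel h2).symm
  have expand : ∀ k ∈ range M,
      (ramanujanSum d1 (k : ℤ) : ℂ) * (ramanujanSum d2 ((k : ℤ) + y) : ℂ) =
      ∑ j1 ∈ (range d1).filter (fun j => Nat.gcd j d1 = 1),
        ∑ j2 ∈ (range d2).filter (fun j => Nat.gcd j d2 = 1),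
          (z ^ (M / d1)) ^ ((j1 : ℤ) * k) * (z ^ (M / d2)) ^ ((j2 : ℤ) * ((k : ℤ) + y)) := by
    intro k _
    rw [rs_eq_sum h10 hw1 (k : ℤ), rs_eq_sum h20 hw2 ((k : ℤ) + y), Finset.sum_mul_sum]
  rw [Finset.sum_congr rfl expand, Finset.sum_comm]
  rw [Finset.sum_congr rfl (fun j1 _ => Finset.sum_comm)]
  have inner : ∀ j1 ∈ (range d1).filter (fun j => Nat.gcd j d1 = 1),
      ∀ j2 ∈ (range d2).filter (fun j => Nat.gcd j d2 = 1),
      ∑ k ∈ range M, (z ^ (M / d1)) ^ ((j1 : ℤ) * k) * (z ^ (M / d2)) ^ ((j2 : ℤ) * ((k : ℤ) + y))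
        = (z ^ (M / d2)) ^ ((j2 : ℤ) * y) *
            (if d1 = d2 ∧ (d1 : ℤ) ∣ (j1 : ℤ) + (j2 : ℤ) then (M : ℂ) else 0) := by
    intro j1 hj1 j2 hj2
    simp only [Finset.mem_filter, Finset.mem_range] at hj1 hj2
    have step : ∀ k ∈ range M,
        (z ^ (M / d1)) ^ ((j1 : ℤ) * k) * (z ^ (M / d2)) ^ ((j2 : ℤ) * ((k : ℤ) + y))
        = (z ^ (M / d2)) ^ ((j2 : ℤ) * y) *
            z ^ ((((M / d1 : ℕ) : ℤ) * j1 + ((M / d2 : ℕ) : ℤ) * j2) * (k : ℤ)) := by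
      intro k _
      rw [← zpow_natCast z (M / d1), ← zpow_natCast z (M / d2), ← zpow_mul, ← zpow_mul,
        ← zpow_mul, ← zpow_add₀ hz0, ← zpow_add₀ hz0]
      congr 1
      ring
    rw [Finset.sum_congr rfl step, ← Finset.mul_sum,
      ortho hM hz ((((M / d1 : ℕ) : ℤ) * j1 + ((M / d2 : ℕ) : ℤ) * j2))]
    congr 1
    rw [if_congr (cond_iff hM h1 h2 h10 h20 hj1.2 hj2.2) rfl rfl]
  rw [Finset.sum_congr rfl (fun j1 hj1 => Finset.sum_congr rfl (fun j2 hj2 => inner j1 hj1 j2 hj2))]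
  by_cases hd : d1 = d2
  · subst hd
    rw [if_pos rfl, Finset.sum_comm]
    have final : ∀ j2 ∈ (range d1).filter (fun j => Nat.gcd j d1 = 1),
        ∑ j1 ∈ (range d1).filter (fun j => Nat.gcd j d1 = 1),
          (z ^ (M / d1)) ^ ((j2 : ℤ) * y) *
            (if d1 = d1 ∧ (d1 : ℤ) ∣ (j1 : ℤ) + (j2 : ℤ) then (M : ℂ) else 0)
        = (M : ℂ) * (z ^ (M / d1)) ^ ((j2 : ℤ) * y) := by
      intro j2 hj2
      simp only [Finset.mem_filter, Finset.mem_range] at hj2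
      rw [← Finset.mul_sum]
      have : ∑ j1 ∈ (range d1).filter (fun j => Nat.gcd j d1 = 1),
          (if d1 = d1 ∧ (d1 : ℤ) ∣ (j1 : ℤ) + (j2 : ℤ) then (M : ℂ) else 0) = (M : ℂ) := by
        simp only [true_and]
        rw [← Finset.sum_filter, unique_j h10 hj2.1 hj2.2, Finset.sum_singleton]
      rw [this, mul_comm]
    rw [Finset.sum_congr rfl final, ← Finset.mul_sum]
    congr 1
    exact (rs_eq_sum h10 hw1 y).symm
  · rw [if_neg hd]
    rw [zero_mul]
    apply Finset.sum_eq_zero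
    intro j1 _
    apply Finset.sum_eq_zero
    intro j2 _
    simp [hd]

lemma rs_coprime {M j : ℕ} (h : Nat.gcd j M = 1) : ramanujanSum M (j : ℤ) = μ M := by
  unfold ramanujanSum
  rw [show Int.gcd (j : ℤ) (M : ℤ) = 1 by rw [Int.gcd_natCast_natCast]; exact h]
  simp

lemma lemB {M : ℕ} (hM : 0 < M) (a : ℤ) :
    ∑ l ∈ (range M).filter (fun l => Nat.gcd l M = 1), ramanujanSum M ((l : ℤ) - a) =
      μ M * ramanujanSum M a := by
  apply (Int.cast_injective (α := ℂ))
  rw [Int.cast_sum, Int.cast_mul]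
  set z : ℂ := Complex.exp (2 * Real.pi * Complex.I / M) with hzdef
  have hz : IsPrimitiveRoot z M := Complex.isPrimitiveRoot_exp M hM.ne'
  have hz0 : z ≠ 0 := Complex.exp_ne_zero _
  have hzpow : IsPrimitiveRoot (z ^ (M / M)) M := hz.pow hM (Nat.div_mul_cancel dvd_rfl).symm
  have hw : IsPrimitiveRoot z M := hz
  have expand : ∀ l ∈ (range M).filter (fun l => Nat.gcd l M = 1),
      (ramanujanSum M ((l : ℤ) - a) : ℂ) =
      ∑ j ∈ (range M).filter (fun j => Nat.gcd j M = 1),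
        z ^ ((l : ℤ) * (j : ℤ)) * z ^ ((j : ℤ) * (-a)) := by
    intro l _
    rw [rs_eq_sum hM hw ((l : ℤ) - a)]
    apply Finset.sum_congr rfl
    intro j _
    rw [← zpow_add₀ hz0]
    congr 1
    ring
  rw [Finset.sum_congr rfl expand, Finset.sum_comm]
  have inner : ∀ j ∈ (range M).filter (fun j => Nat.gcd j M = 1),
      ∑ l ∈ (range M).filter (fun l => Nat.gcd l M = 1),
        z ^ ((l : ℤ) * (j : ℤ)) * z ^ ((j : ℤ) * (-a))
      = ((μ M : ℤ) : ℂ) * z ^ ((j : ℤ) * (-a)) := by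
    intro j hj
    simp only [Finset.mem_filter, Finset.mem_range] at hj
    rw [← Finset.sum_mul, ← rs_eq_sum hM hw (j : ℤ), rs_coprime hj.2]
  rw [Finset.sum_congr rfl inner, ← Finset.mul_sum, ← rs_eq_sum hM hw (-a)]
  have : ramanujanSum M (-a) = ramanujanSum M a := by
    rw [show -a = -(a) from rfl, rs_neg]
  rw [this]

lemma sum_piFinset_succ {n : ℕ} {β : Type*} [AddCommMonoid β] (M : ℕ)
    (f : (Fin (n + 1) → ℕ) → β) :
    ∑ k ∈ Fintype.piFinset (fun _ : Fin (n + 1) => range M), f k =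
      ∑ x ∈ range M, ∑ k ∈ Fintype.piFinset (fun _ : Fin n => range M), f (Fin.cons x k) := by
  rw [← Finset.sum_product']
  refine Finset.sum_nbij' (fun k => (k 0, Fin.tail k)) (fun p => Fin.cons p.1 p.2)
    ?_ ?_ ?_ ?_ ?_
  · intro k hk
    simp only [Fintype.mem_piFinset] at hk
    simp only [Finset.mem_product, Fintype.mem_piFinset]
    exact ⟨hk 0, fun i => hk i.succ⟩
  · intro p hp
    simp only [Finset.mem_product, Fintype.mem_piFinset] at hp
    simp only [Fintype.mem_piFinset]
    intro i
    refine Fin.cases ?_ ?_ i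
    · simpa using hp.1
    · intro j; simpa using hp.2 j
  · intro k _
    exact Fin.cons_self_tail k
  · intro p _
    simp [Fin.tail_cons]
  · intro k _
    rw [Fin.cons_self_tail]

lemma aux_eval (M : ℕ) (hM : 0 < M) : ∀ (n : ℕ) (d : Fin (n + 1) → ℕ),
    (∀ i, 0 < d i) → (∀ i, d i ∣ M) → ∀ a : ℤ,
    (∑ k ∈ Fintype.piFinset (fun _ : Fin n => range M),
      ∑ l ∈ (range M).filter (fun l => Nat.gcd l M = 1),
        (∏ i : Fin n, ramanujanSum (d i.castSucc) (k i)) *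
          ramanujanSum (d (Fin.last n)) ((∑ i : Fin n, (k i : ℤ)) + l - a))
    = (if ∀ i : Fin n, d i.castSucc = d (Fin.last n) then (M : ℤ) ^ n else 0) *
        ∑ l ∈ (range M).filter (fun l => Nat.gcd l M = 1),
          ramanujanSum (d (Fin.last n)) ((l : ℤ) - a) := by
  intro n
  induction n with
  | zero =>
    intro d hd hdvd a
    have h0 : Fintype.piFinset (fun _ : Fin 0 => range M) = {(fun i => i.elim0 : Fin 0 → ℕ)} := by
      ext k
      simp only [Fintype.mem_piFinset, Finset.mem_singleton]
      constructor
      · intro _; funext i; exact i.elim0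
      · intro _ i; exact i.elim0
    rw [h0, Finset.sum_singleton]
    rw [if_pos (fun i => i.elim0)]
    simp
  | succ n ih =>
    intro d hd hdvd a
    have hd' : ∀ i : Fin (n + 1), 0 < d i.succ := fun i => hd _
    have hdvd' : ∀ i : Fin (n + 1), d i.succ ∣ M := fun i => hdvd _
    rw [sum_piFinset_succ]
    have step1 : ∀ x ∈ range M,
        (∑ k ∈ Fintype.piFinset (fun _ : Fin n => range M),
          ∑ l ∈ (range M).filter (fun l => Nat.gcd l M = 1),
            (∏ i : Fin (n + 1), ramanujanSum (d i.castSucc) ((Fin.cons x k : Fin (n + 1) → ℕ) i)) *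
              ramanujanSum (d (Fin.last (n + 1)))
                ((∑ i : Fin (n + 1), (((Fin.cons x k : Fin (n + 1) → ℕ) i : ℕ) : ℤ)) + l - a))
        = ∑ k ∈ Fintype.piFinset (fun _ : Fin n => range M),
          ∑ l ∈ (range M).filter (fun l => Nat.gcd l M = 1),
            (ramanujanSum (d 0) (x : ℤ) *
              ∏ i : Fin n, ramanujanSum (d i.succ.castSucc) (k i)) *
              ramanujanSum (d (Fin.last (n + 1)))
                ((x : ℤ) + ((∑ i : Fin n, (k i : ℤ)) + l - a)) := by
      intro x _
      refine Finset.sum_congr rfl fun k _ => Finset.sum_congr rfl fun l _ => ?_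
      congr 1
      · rw [Fin.prod_univ_succ]
        congr 1
      · congr 1
        rw [Fin.sum_univ_succ, Fin.cons_zero]
        have : ∀ i : Fin n, (((Fin.cons x k : Fin (n + 1) → ℕ) i.succ : ℕ) : ℤ) = (k i : ℤ) := by
          intro i; rw [Fin.cons_succ]
        rw [Finset.sum_congr rfl (fun i _ => this i)]
        ring
    refine ((Finset.sum_congr rfl step1).trans ?_)
    rw [Finset.sum_comm]
    have step2 : ∀ k ∈ Fintype.piFinset (fun _ : Fin n => range M),
        (∑ x ∈ range M,
          ∑ l ∈ (range M).filter (fun l => Nat.gcd l M = 1),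
            (ramanujanSum (d 0) (x : ℤ) *
              ∏ i : Fin n, ramanujanSum (d i.succ.castSucc) (k i)) *
              ramanujanSum (d (Fin.last (n + 1)))
                ((x : ℤ) + ((∑ i : Fin n, (k i : ℤ)) + l - a)))
        = ∑ l ∈ (range M).filter (fun l => Nat.gcd l M = 1),
            (if d 0 = d (Fin.last (n + 1)) then (M : ℤ) else 0) *
            ((∏ i : Fin n, ramanujanSum (d i.succ.castSucc) (k i)) *
              ramanujanSum (d (Fin.last (n + 1))) ((∑ i : Fin n, (k i : ℤ)) + l - a)) := by
      intro k _
      rw [Finset.sum_comm]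
      refine Finset.sum_congr rfl fun l _ => ?_
      have conv := convA hM (hdvd 0) (hdvd (Fin.last (n + 1))) (hd 0) (hd (Fin.last (n + 1)))
        ((∑ i : Fin n, (k i : ℤ)) + l - a)
      calc ∑ x ∈ range M,
            (ramanujanSum (d 0) (x : ℤ) *
              ∏ i : Fin n, ramanujanSum (d i.succ.castSucc) (k i)) *
              ramanujanSum (d (Fin.last (n + 1)))
                ((x : ℤ) + ((∑ i : Fin n, (k i : ℤ)) + l - a))
          = (∏ i : Fin n, ramanujanSum (d i.succ.castSucc) (k i)) *
            ∑ x ∈ range M, ramanujanSum (d 0) (x : ℤ) *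
              ramanujanSum (d (Fin.last (n + 1)))
                ((x : ℤ) + ((∑ i : Fin n, (k i : ℤ)) + l - a)) := by
            rw [Finset.mul_sum]
            refine Finset.sum_congr rfl fun x _ => ?_
            ring
        _ = _ := by
            rw [conv]
            ring
    rw [Finset.sum_congr rfl step2]
    have step3 : (∑ k ∈ Fintype.piFinset (fun _ : Fin n => range M),
        ∑ l ∈ (range M).filter (fun l => Nat.gcd l M = 1),
          (if d 0 = d (Fin.last (n + 1)) then (M : ℤ) else 0) *
          ((∏ i : Fin n, ramanujanSum (d i.succ.castSucc) (k i)) *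
            ramanujanSum (d (Fin.last (n + 1))) ((∑ i : Fin n, (k i : ℤ)) + l - a)))
        = (if d 0 = d (Fin.last (n + 1)) then (M : ℤ) else 0) *
          ∑ k ∈ Fintype.piFinset (fun _ : Fin n => range M),
          ∑ l ∈ (range M).filter (fun l => Nat.gcd l M = 1),
            (∏ i : Fin n, ramanujanSum (d i.succ.castSucc) (k i)) *
              ramanujanSum (d (Fin.last (n + 1))) ((∑ i : Fin n, (k i : ℤ)) + l - a) := by
      rw [Finset.mul_sum]
      refine Finset.sum_congr rfl fun k _ => ?_
      rw [Finset.mul_sum]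
    rw [step3]
    have ihapp := ih (fun i => d i.succ) hd' hdvd' a
    have hfin : (Fin.last n).succ = Fin.last (n + 1) := rfl
    have hsc : ∀ i : Fin n, (i.succ.castSucc : Fin (n + 2)) = i.castSucc.succ := fun i => rfl
    simp only [hsc, ← hfin]
    rw [ihapp, ← mul_assoc]
    congr 1
    have hcond : (∀ i : Fin (n + 1), d i.castSucc = d (Fin.last n).succ) ↔
        (d 0 = d (Fin.last n).succ ∧
          ∀ i : Fin n, d i.castSucc.succ = d (Fin.last n).succ) := by
      constructor
      · intro h
        exact ⟨h 0, fun i => h i.succ⟩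
      · rintro ⟨h1, h2⟩
        intro i
        refine Fin.cases ?_ ?_ i
        · exact h1
        · exact h2
    rw [if_congr hcond rfl rfl]
    by_cases hA : d 0 = d (Fin.last n).succ
    · by_cases hB : ∀ i : Fin n, d i.castSucc.succ = d (Fin.last n).succ
      · rw [if_pos (⟨hA, hB⟩ : _ ∧ _), if_pos hA, if_pos hB, pow_succ]
        ring
      · have hB' : ¬∀ i : Fin n, d i.castSucc.succ = d (Fin.last (n + 1)) := by
          rw [← hfin]; exact hB
        simp [hB']
    · have hA' : ¬d 0 = d (Fin.last (n + 1)) := by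
        rw [← hfin]; exact hA
      simp [hA']

theorem eval_T_a {n : ℕ} (m : Fin (n + 1) → ℕ) (hm : ∀ i, 0 < m i) (a : ℤ) :
    ∑ k ∈ Fintype.piFinset (fun _ : Fin n => Finset.range (Finset.univ.lcm m)),
      ∑ l ∈ (Finset.range (Finset.univ.lcm m)).filter
          (fun l => Nat.gcd l (Finset.univ.lcm m) = 1),
        (∏ i : Fin n, ramanujanSum (m i.castSucc) (k i)) *
          ramanujanSum (m (Fin.last n)) ((∑ i : Fin n, (k i : ℤ)) + l - a) =
    if ∀ i, m i = Finset.univ.lcm m then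
      ((Finset.univ.lcm m : ℕ) : ℤ) ^ n * μ (Finset.univ.lcm m) *
        ramanujanSum (Finset.univ.lcm m) a
    else 0 := by
  set M := Finset.univ.lcm m with hMdef
  have hdvd : ∀ i, m i ∣ M := fun i => Finset.dvd_lcm (Finset.mem_univ i)
  have hM : 0 < M := by
    rcases Nat.eq_zero_or_pos M with h | h
    · exfalso
      rw [hMdef, Finset.lcm_eq_zero_iff] at h
      obtain ⟨i, -, hi⟩ := h
      exact (hm i).ne' hi
    · exact h
  have key := aux_eval M hM n m hm hdvd a
  rw [key]
  by_cases hall : ∀ i, m i = M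
  · rw [if_pos hall]
    have hcond : ∀ i : Fin n, m i.castSucc = m (Fin.last n) := by
      intro i; rw [hall, hall]
    rw [if_pos hcond, show m (Fin.last n) = M from hall _, lemB hM a]
    ring
  · rw [if_neg hall]
    by_cases hc : ∀ i : Fin n, m i.castSucc = m (Fin.last n)
    · exfalso
      apply hall
      have hall' : ∀ i, m i = m (Fin.last n) := by
        intro i
        rcases Fin.eq_castSucc_or_eq_last i with ⟨j, rfl⟩ | rfl
        · exact hc j
        · rfl
      have hdvd2 : M ∣ m (Fin.last n) := by
        apply Finset.lcm_dvd
        intro b _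
        exact hall' b ▸ dvd_rfl
      have hMeq : M = m (Fin.last n) := Nat.dvd_antisymm hdvd2 (hdvd _)
      intro i
      rw [hall' i, ← hMeq]
    · rw [if_neg hc, zero_mul]
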